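/- In the min-cost augmentation reduction from monotone 1-in-3 SAT, the base graph G admits no popular matching: with a single copy of every item, the three people a1^i, a2^i, a3^i of any clause gadget have f-item p_i and s-item q_i only, so no matching can be popular. -/

import Mathlib

/-- Person `a` prefers matching `M` to `M'`. -/
def Prefers {α β : Type*} (rank : α → β → ℕ∞) (M M' : α → Option β) (a : α) : Prop :=
  (∃ b, M a = some b ∧ M' a = none) ∨
  (∃ b b', M a = some b ∧ M' a = some b' ∧ rank a b < rank a b')

/-- `M'` is more popular than `M`. -/
def MorePopular {α β : Type*} [Fintype α] (rank : α → β → ℕ∞) (M' M : α → Option β) : Prop :=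
  Nat.card {a // Prefers rank M M' a} < Nat.card {a // Prefers rank M' M a}

/-- `(a,b)` is an edge of the instance: `b` is on `a`'s preference list. -/
def Edge {α β : Type*} (rank : α → β → ℕ∞) (a : α) (b : β) : Prop := rank a b ≠ ⊤

/-- Number of people matched to item `b`. -/
noncomputable def usage {α β : Type*} [Fintype α] (M : α → Option β) (b : β) : ℕ :=
  Nat.card {a // M a = some b}

/-- A matching of the instance in which each item `b` may be matched to up to
`copies b` people (`copies b = 0` means `b` is not available). -/
def IsCapMatching {α β : Type*} [Fintype α] (rank : α → β → ℕ∞) (copies : β → ℕ)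
    (M : α → Option β) : Prop :=
  (∀ a b, M a = some b → Edge rank a b) ∧ ∀ b, usage M b ≤ copies b

/-- A popular matching of the capacitated instance. -/
def PopularCap {α β : Type*} [Fintype α] (rank : α → β → ℕ∞) (copies : β → ℕ)
    (M : α → Option β) : Prop :=
  IsCapMatching rank copies M ∧
  ∀ M', IsCapMatching rank copies M' → ¬ MorePopular rank M' M

/-- A 1-in-3 satisfying assignment: exactly one literal of every clause is true. -/
def ExactlyOneTrue {n : ℕ} {m : ℕ} (cl : Fin m → Fin 3 → Fin n) (τ : Fin n → Bool) : Prop :=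
  ∀ i, ∃! k : Fin 3, τ (cl i k) = true

/-- People of the min-cost augmentation construction: `Sum.inl (i,k)` (k = 0..5) are the
6 people of the clause-`i` gadget, and `Sum.inr j` is the person `x_j` of variable `X_j`. -/
abbrev AugPeople (m n : ℕ) := (Fin m × Fin 6) ⊕ Fin n

/-- Items: `Sum.inl (i,0) = p_i`, `Sum.inl (i,1) = q_i`, `Sum.inl (i,2) = r_i` are the
internal items of clause `i`, and `Sum.inr j = u_j` is the public item of variable `X_j`. -/
abbrev AugItems (m n : ℕ) := (Fin m × Fin 3) ⊕ Fin n

/-- Preference lists (Fig. 2): for clause `Cᵢ = (X_{j₁} ∨ X_{j₂} ∨ X_{j₃})`, people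
`a₁..a₃` have lists `(p_i, u_{j_k}, q_i)` and people `a₄..a₆` have lists `(r_i, u_{j_k})`
for `k = 1,2,3`; person `x_j` has the single-item list `(u_j)`. -/
def augRank {m n : ℕ} (cl : Fin m → Fin 3 → Fin n) :
    AugPeople m n → AugItems m n → ℕ∞ := fun a b =>
  match a with
  | Sum.inl ik =>
      let i := ik.1
      let k : ℕ := (ik.2 : ℕ)
      match b with
      | Sum.inl it =>
          if it.1 = i then
            (if k ≤ 2 ∧ (it.2 : ℕ) = 0 then 1
             else if k ≤ 2 ∧ (it.2 : ℕ) = 1 then 3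
             else if 3 ≤ k ∧ (it.2 : ℕ) = 2 then 1
             else ⊤)
          else ⊤
      | Sum.inr u =>
          if k = 0 ∨ k = 3 then (if u = cl i 0 then 2 else ⊤)
          else if k = 1 ∨ k = 4 then (if u = cl i 1 then 2 else ⊤)
          else if k = 2 ∨ k = 5 then (if u = cl i 2 then 2 else ⊤)
          else ⊤
  | Sum.inr j =>
      match b with
      | Sum.inl _ => ⊤
      | Sum.inr u => if u = j then 1 else ⊤

/-- Costs per extra copy: each internal item `p_i, q_i, r_i` costs 2, each public item
`u_j` costs 1. -/
def augCostFn {m n : ℕ} : AugItems m n → ℕ := fun b =>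
  match b with
  | Sum.inl _ => 2
  | Sum.inr _ => 1

/-- Cost of an augmentation `extra` (number of extra copies of each item). -/
def augCost {m n : ℕ} (extra : AugItems m n → ℕ) : ℕ :=
  ∑ b : AugItems m n, extra b * augCostFn b


section PopHelpers
variable {α β : Type*} [Fintype α] {rank : α → β → ℕ∞} {M M' : α → Option β}

lemma usage_eq (M : α → Option β) (b : β) : usage M b = ({z | M z = some b} : Set α).ncard :=
  Nat.card_coe_set_eq _

lemma usage_le_of (b : β) (h : ∀ z, M' z = some b → M z = some b) : usage M' b ≤ usage M b := by
  rw [usage_eq, usage_eq]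
  exact Set.ncard_le_ncard h (Set.toFinite _)

lemma usage_le_one_single (b : β) (w : α) (h : ∀ z, M z = some b → z = w) : usage M b ≤ 1 := by
  rw [usage_eq]
  calc ({z | M z = some b} : Set α).ncard ≤ ({w} : Set α).ncard :=
        Set.ncard_le_ncard (fun z hz => h z hz) (Set.toFinite _)
    _ = 1 := Set.ncard_singleton w

lemma unique_holder {b : β} (h : usage M b ≤ 1) {z w : α} (hz : M z = some b)
    (hw : M w = some b) : z = w := by
  by_contra hne
  have h2 : ({z, w} : Set α).ncard ≤ usage M b := by
    rw [usage_eq]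
    exact Set.ncard_le_ncard (by simp [Set.insert_subset_iff, hz, hw]) (Set.toFinite _)
  rw [Set.ncard_pair hne] at h2
  omega

omit [Fintype α] in
lemma prefers_ne {z : α} (h : Prefers rank M M' z) : M z ≠ M' z := by
  rcases h with ⟨b, hb, hb'⟩ | ⟨b, b', hb, hb', hr⟩
  · intro he
    rw [he, hb'] at hb
    exact nomatch hb
  · intro he
    rw [he, hb'] at hb
    injection hb with h3
    rw [h3] at hr
    exact lt_irrefl _ hr

lemma morePop_one (g : α) (hsub : ∀ z, ¬ Prefers rank M M' z)
    (h1 : Prefers rank M' M g) : MorePopular rank M' M := by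
  unfold MorePopular
  have e1 : Nat.card {a // Prefers rank M M' a} = ({a | Prefers rank M M' a} : Set α).ncard :=
    Nat.card_coe_set_eq _
  have e2 : Nat.card {a // Prefers rank M' M a} = ({a | Prefers rank M' M a} : Set α).ncard :=
    Nat.card_coe_set_eq _
  rw [e1, e2]
  have h0 : ({a | Prefers rank M M' a} : Set α) = ∅ := by
    ext z; simp [hsub z]
  rw [h0, Set.ncard_empty]
  have : ({g} : Set α).ncard ≤ ({a | Prefers rank M' M a} : Set α).ncard :=
    Set.ncard_le_ncard (by simpa using h1) (Set.toFinite _)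
  rw [Set.ncard_singleton] at this
  omega

lemma morePop_two (w g1 g2 : α) (hg : g1 ≠ g2)
    (hsub : ∀ z, Prefers rank M M' z → z = w)
    (h1 : Prefers rank M' M g1) (h2 : Prefers rank M' M g2) : MorePopular rank M' M := by
  unfold MorePopular
  have e1 : Nat.card {a // Prefers rank M M' a} = ({a | Prefers rank M M' a} : Set α).ncard :=
    Nat.card_coe_set_eq _
  have e2 : Nat.card {a // Prefers rank M' M a} = ({a | Prefers rank M' M a} : Set α).ncard :=
    Nat.card_coe_set_eq _
  rw [e1, e2]
  have hle : ({a | Prefers rank M M' a} : Set α).ncard ≤ 1 := by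
    calc ({a | Prefers rank M M' a} : Set α).ncard ≤ ({w} : Set α).ncard :=
          Set.ncard_le_ncard (fun z hz => hsub z hz) (Set.toFinite _)
      _ = 1 := Set.ncard_singleton w
  have hge : 2 ≤ ({a | Prefers rank M' M a} : Set α).ncard := by
    have : ({g1, g2} : Set α).ncard ≤ ({a | Prefers rank M' M a} : Set α).ncard :=
      Set.ncard_le_ncard (by simp [Set.insert_subset_iff, h1, h2]) (Set.toFinite _)
    rwa [Set.ncard_pair hg] at this
  omega

end PopHelpers

section AugFacts
variable {m n : ℕ} {cl : Fin m → Fin 3 → Fin n}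

/-- Person `a_{k+1}` of clause `i` (for `k = 0,1,2`). -/
def pers {m n : ℕ} (i : Fin m) (k : Fin 3) : AugPeople m n :=
  Sum.inl (i, ⟨k.1, by omega⟩)

def itP {m n : ℕ} (i : Fin m) : AugItems m n := Sum.inl (i, 0)
def itQ {m n : ℕ} (i : Fin m) : AugItems m n := Sum.inl (i, 1)

lemma pers_inj {i : Fin m} {k k' : Fin 3} (h : pers (m := m) (n := n) i k = pers i k') :
    k = k' := by
  simp only [pers, Sum.inl.injEq, Prod.mk.injEq, Fin.mk.injEq, true_and] at h
  exact Fin.ext h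

lemma rank_P (i : Fin m) (k : Fin 3) : augRank cl (pers i k) (itP i) = 1 := by
  have hk : (k : ℕ) ≤ 2 := by omega
  simp [augRank, pers, itP, hk]

lemma rank_Q (i : Fin m) (k : Fin 3) : augRank cl (pers i k) (itQ i) = 3 := by
  have hk : (k : ℕ) ≤ 2 := by omega
  simp [augRank, pers, itQ, hk]

lemma rank_U (i : Fin m) (k : Fin 3) :
    augRank cl (pers i k) (Sum.inr (cl i k)) = 2 := by
  fin_cases k <;> simp [augRank, pers]

lemma rank_x (j : Fin n) : augRank cl (Sum.inr j : AugPeople m n) (Sum.inr j) = 1 := by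
  simp [augRank]

lemma one_le_rank (a : AugPeople m n) (b : AugItems m n) : 1 ≤ augRank cl a b := by
  unfold augRank
  rcases a with ⟨i, k⟩ | j <;> rcases b with ⟨i', t⟩ | u <;> simp only <;>
    (try split_ifs) <;> (first | exact le_top | norm_num)

lemma edge_pers {i : Fin m} {k : Fin 3} {b : AugItems m n}
    (h : augRank cl (pers i k) b ≠ ⊤) :
    b = itP i ∨ b = itQ i ∨ b = Sum.inr (cl i k) := by
  rcases b with ⟨i', t⟩ | u
  · have hk : (k : ℕ) ≤ 2 := by omega
    simp only [augRank, pers, itP, itQ] at h ⊢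
    split_ifs at h with h1 h2 h3 h4
    · subst h1
      left
      have : t = 0 := Fin.ext h2.2
      rw [this]
    · subst h1
      right; left
      have : t = 1 := Fin.ext h3.2
      rw [this]
    · omega
    · exact absurd rfl h
    · exact absurd rfl h
  · simp only [augRank, pers] at h
    fin_cases k <;> simp_all

lemma edge_x {j : Fin n} {b : AugItems m n}
    (h : augRank cl (Sum.inr j : AugPeople m n) b ≠ ⊤) : b = Sum.inr j := by
  rcases b with it | u
  · simp [augRank] at h
  · simp only [augRank] at h
    split_ifs at h with h1
    · rw [h1]
    · exact absurd rfl h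

lemma edge_P {i : Fin m} {z : AugPeople m n} (h : augRank cl z (itP i) ≠ ⊤) :
    ∃ k : Fin 3, z = pers i k := by
  rcases z with ⟨i', k'⟩ | j
  · simp only [augRank, itP] at h
    split_ifs at h with h1 h2 h3 h4
    · refine ⟨⟨(k' : ℕ), by omega⟩, ?_⟩
      simp [pers, h1]
    · simp at h3
    · simp at h4
    · exact absurd rfl h
    · exact absurd rfl h
  · simp [augRank, itP] at h

lemma edge_Q {i : Fin m} {z : AugPeople m n} (h : augRank cl z (itQ i) ≠ ⊤) :
    ∃ k : Fin 3, z = pers i k := by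
  rcases z with ⟨i', k'⟩ | j
  · simp only [augRank, itQ] at h
    split_ifs at h with h1 h2 h3 h4
    · simp at h2
    · refine ⟨⟨(k' : ℕ), by omega⟩, ?_⟩
      simp [pers, h1]
    · simp at h4
    · exact absurd rfl h
    · exact absurd rfl h
  · simp [augRank, itQ] at h

lemma fin3_tri : ∀ (r s t k : Fin 3), r ≠ s → r ≠ t → s ≠ t → k = r ∨ k = s ∨ k = t := by
  decide

end AugFacts

/-- The base graph of the min-cost augmentation reduction (a single copy of every item)
admits no popular matching. -/
theorem aug_base_graph_has_no_popular_matching {m n : ℕ} (hm : 0 < m)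
    (cl : Fin m → Fin 3 → Fin n) (hdist : ∀ i, Function.Injective (cl i)) :
    ¬ ∃ M : AugPeople m n → Option (AugItems m n),
        PopularCap (augRank cl) (fun _ => 1) M := by
  rintro ⟨M, ⟨hedge, hcap⟩, hpop⟩
  have hcap1 : ∀ b, usage M b ≤ 1 := hcap
  set i : Fin m := ⟨0, hm⟩ with hidef
  have hPhold : ∀ z, M z = some (itP i) → ∃ k : Fin 3, z = pers i k :=
    fun z hz => edge_P (hedge z _ hz)
  have hQhold : ∀ z, M z = some (itQ i) → ∃ k : Fin 3, z = pers i k :=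
    fun z hz => edge_Q (hedge z _ hz)
  have hxdom : ∀ (j : Fin n) (b : AugItems m n), M (Sum.inr j) = some b → b = Sum.inr j :=
    fun j b hb => edge_x (hedge _ _ hb)
  have domA : ∀ k : Fin 3, M (pers i k) = none ∨ M (pers i k) = some (itP i) ∨
      M (pers i k) = some (itQ i) ∨ M (pers i k) = some (Sum.inr (cl i k)) := by
    intro k
    cases hMk : M (pers i k) with
    | none => exact Or.inl rfl
    | some b =>
        rcases edge_pers (hedge _ _ hMk) with h | h | h <;> subst h <;> simp
  have hPQ : itP (m := m) (n := n) i ≠ itQ i := by simp [itP, itQ]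
  -- Step 1 : p_i is matched, to some a_r
  have hex : ∃ r : Fin 3, M (pers i r) = some (itP i) := by
    by_contra hno
    push_neg at hno
    have hPfree : ∀ z, M z ≠ some (itP i) := by
      intro z hz
      obtain ⟨k, rfl⟩ := hPhold z hz
      exact hno k hz
    set M' := Function.update M (pers i 0) (some (itP i)) with hM'def
    refine hpop M' ⟨?_, ?_⟩ ?_
    · intro a b hb
      by_cases ha : a = pers i 0
      · subst ha
        rw [hM'def, Function.update_self] at hb
        injection hb with hb
        subst hb
        show augRank cl (pers i 0) (itP i) ≠ ⊤
        rw [rank_P]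
        norm_num
      · rw [hM'def, Function.update_of_ne ha] at hb
        exact hedge _ _ hb
    · intro b
      show usage M' b ≤ 1
      by_cases hbP : b = itP i
      · subst hbP
        apply usage_le_one_single _ (pers i 0)
        intro z hz
        by_cases hz0 : z = pers i 0
        · exact hz0
        · rw [hM'def, Function.update_of_ne hz0] at hz
          exact absurd hz (hPfree z)
      · calc usage M' b ≤ usage M b := by
              apply usage_le_of
              intro z hz
              by_cases hz0 : z = pers i 0
              · subst hz0
                rw [hM'def, Function.update_self] at hz
                injection hz with hz
                exact absurd hz.symm hbP
              · rwa [hM'def, Function.update_of_ne hz0] at hz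
          _ ≤ 1 := hcap1 b
    · have hM'0 : M' (pers i 0) = some (itP i) := Function.update_self _ _ _
      apply morePop_one (pers i 0)
      · intro z hz
        by_cases hz0 : z = pers i 0
        · subst hz0
          rcases hz with ⟨b, hb, hb'⟩ | ⟨b, b', hb, hb', hlt⟩
          · rw [hM'0] at hb'
            exact nomatch hb'
          · rw [hM'0] at hb'
            injection hb' with hb''
            rw [← hb'', rank_P] at hlt
            exact absurd hlt (not_lt.mpr (one_le_rank _ _))
        · exact prefers_ne hz (by rw [hM'def, Function.update_of_ne hz0])
      · rcases domA 0 with h0 | h0 | h0 | h0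
        · exact Or.inl ⟨itP i, hM'0, h0⟩
        · exact absurd h0 (hno 0)
        · refine Or.inr ⟨itP i, itQ i, hM'0, h0, ?_⟩
          rw [rank_P, rank_Q]
          norm_num
        · refine Or.inr ⟨itP i, _, hM'0, h0, ?_⟩
          rw [rank_P, rank_U]
          norm_num
  obtain ⟨r, hr⟩ := hex
  -- Case construction 1 : no a_s (s ≠ r) is matched to its u-item
  have caseU : ∀ s : Fin 3, r ≠ s → M (pers i s) ≠ some (Sum.inr (cl i s)) := by
    intro s hrs hMs
    have hperssx : pers (m := m) (n := n) i s ≠ Sum.inr (cl i s) := by simp [pers]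
    have hpersrs : pers (m := m) (n := n) i r ≠ pers i s := fun h => hrs (pers_inj h)
    have hpersrx : pers (m := m) (n := n) i r ≠ Sum.inr (cl i s) := by simp [pers]
    have hx : M (Sum.inr (cl i s) : AugPeople m n) = none := by
      cases hXs : M (Sum.inr (cl i s) : AugPeople m n) with
      | none => rfl
      | some b =>
          have hb := hxdom _ _ hXs
          subst hb
          exact absurd (unique_holder (hcap1 _) hXs hMs) (Ne.symm hperssx)
    set M' := Function.update (Function.update (Function.update M (pers i r) none)
      (pers i s) (some (itP i))) (Sum.inr (cl i s) : AugPeople m n)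
      (some (Sum.inr (cl i s))) with hM'def
    have e3 : M' (Sum.inr (cl i s) : AugPeople m n) = some (Sum.inr (cl i s)) :=
      Function.update_self _ _ _
    have e2 : M' (pers i s) = some (itP i) := by
      rw [hM'def, Function.update_of_ne hperssx, Function.update_self]
    have e1 : M' (pers i r) = none := by
      rw [hM'def, Function.update_of_ne hpersrx, Function.update_of_ne hpersrs,
        Function.update_self]
    have eo : ∀ z, z ≠ pers i r → z ≠ pers i s → z ≠ (Sum.inr (cl i s) : AugPeople m n) →
        M' z = M z := by
      intro z h1 h2 h3
      rw [hM'def, Function.update_of_ne h3, Function.update_of_ne h2,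
        Function.update_of_ne h1]
    refine hpop M' ⟨?_, ?_⟩ ?_
    · intro a b hb
      by_cases h3 : a = (Sum.inr (cl i s) : AugPeople m n)
      · subst h3
        rw [e3] at hb
        injection hb with hb
        subst hb
        show augRank cl _ _ ≠ ⊤
        rw [rank_x]
        norm_num
      · by_cases h2 : a = pers i s
        · subst h2
          rw [e2] at hb
          injection hb with hb
          subst hb
          show augRank cl _ _ ≠ ⊤
          rw [rank_P]
          norm_num
        · by_cases h1 : a = pers i r
          · subst h1
            rw [e1] at hb
            exact nomatch hb
          · rw [eo a h1 h2 h3] at hb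
            exact hedge _ _ hb
    · intro b
      show usage M' b ≤ 1
      by_cases hbP : b = itP i
      · subst hbP
        apply usage_le_one_single _ (pers i s)
        intro z hz
        by_cases h3 : z = (Sum.inr (cl i s) : AugPeople m n)
        · subst h3
          rw [e3] at hz
          injection hz with hz
          exact absurd hz (by simp [itP])
        · by_cases h2 : z = pers i s
          · exact h2
          · by_cases h1 : z = pers i r
            · subst h1
              rw [e1] at hz
              exact nomatch hz
            · rw [eo z h1 h2 h3] at hz
              exact absurd (unique_holder (hcap1 _) hz hr) h1
      · by_cases hbU : b = (Sum.inr (cl i s) : AugItems m n)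
        · subst hbU
          apply usage_le_one_single _ (Sum.inr (cl i s) : AugPeople m n)
          intro z hz
          by_cases h3 : z = (Sum.inr (cl i s) : AugPeople m n)
          · exact h3
          · by_cases h2 : z = pers i s
            · subst h2
              rw [e2] at hz
              injection hz with hz
              exact absurd hz (by simp [itP])
            · by_cases h1 : z = pers i r
              · subst h1
                rw [e1] at hz
                exact nomatch hz
              · rw [eo z h1 h2 h3] at hz
                exact absurd (unique_holder (hcap1 _) hz hMs) h2
        · calc usage M' b ≤ usage M b := by
                apply usage_le_of
                intro z hz
                by_cases h3 : z = (Sum.inr (cl i s) : AugPeople m n)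
                · subst h3
                  rw [e3] at hz
                  injection hz with hz
                  exact absurd hz.symm hbU
                · by_cases h2 : z = pers i s
                  · subst h2
                    rw [e2] at hz
                    injection hz with hz
                    exact absurd hz.symm hbP
                  · by_cases h1 : z = pers i r
                    · subst h1
                      rw [e1] at hz
                      exact nomatch hz
                    · rwa [eo z h1 h2 h3] at hz
            _ ≤ 1 := hcap1 b
    · apply morePop_two (pers i r) (pers i s) (Sum.inr (cl i s) : AugPeople m n) hperssx
      · intro z hz
        by_cases h3 : z = (Sum.inr (cl i s) : AugPeople m n)
        · subst h3
          rcases hz with ⟨b, hb, _⟩ | ⟨b, b', hb, _, _⟩ <;>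
            rw [hx] at hb <;> exact nomatch hb
        · by_cases h2 : z = pers i s
          · subst h2
            rcases hz with ⟨b, hb, hb'⟩ | ⟨b, b', hb, hb', hlt⟩
            · rw [e2] at hb'
              exact nomatch hb'
            · rw [e2] at hb'
              injection hb' with hb'
              rw [hMs] at hb
              injection hb with hb
              rw [← hb, ← hb', rank_U, rank_P] at hlt
              norm_num at hlt
          · by_cases h1 : z = pers i r
            · exact h1
            · exact absurd (prefers_ne hz (by rw [eo z h1 h2 h3])) (fun h => h)
      · refine Or.inr ⟨itP i, Sum.inr (cl i s), e2, hMs, ?_⟩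
        rw [rank_P, rank_U]
        norm_num
      · exact Or.inl ⟨Sum.inr (cl i s), e3, hx⟩
  -- Case construction 2 : q_i free and some a_t unmatched is impossible
  have caseQfree : ∀ t : Fin 3, M (pers i t) = none → (∀ z, M z ≠ some (itQ i)) → False := by
    intro t ht hQfree
    set M' := Function.update M (pers i t) (some (itQ i)) with hM'def
    refine hpop M' ⟨?_, ?_⟩ ?_
    · intro a b hb
      by_cases ha : a = pers i t
      · subst ha
        rw [hM'def, Function.update_self] at hb
        injection hb with hb
        subst hb
        show augRank cl (pers i t) (itQ i) ≠ ⊤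
        rw [rank_Q]
        norm_num
      · rw [hM'def, Function.update_of_ne ha] at hb
        exact hedge _ _ hb
    · intro b
      show usage M' b ≤ 1
      by_cases hbQ : b = itQ i
      · subst hbQ
        apply usage_le_one_single _ (pers i t)
        intro z hz
        by_cases hz0 : z = pers i t
        · exact hz0
        · rw [hM'def, Function.update_of_ne hz0] at hz
          exact absurd hz (hQfree z)
      · calc usage M' b ≤ usage M b := by
              apply usage_le_of
              intro z hz
              by_cases hz0 : z = pers i t
              · subst hz0
                rw [hM'def, Function.update_self] at hz
                injection hz with hz
                exact absurd hz.symm hbQ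
              · rwa [hM'def, Function.update_of_ne hz0] at hz
          _ ≤ 1 := hcap1 b
    · have hM't : M' (pers i t) = some (itQ i) := Function.update_self _ _ _
      apply morePop_one (pers i t)
      · intro z hz
        by_cases hz0 : z = pers i t
        · subst hz0
          rcases hz with ⟨b, hb, _⟩ | ⟨b, b', hb, _, _⟩ <;>
            rw [ht] at hb <;> exact nomatch hb
        · exact prefers_ne hz (by rw [hM'def, Function.update_of_ne hz0])
      · exact Or.inl ⟨itQ i, hM't, ht⟩
  -- Case construction 3 : the rotation p → s, q → t
  have caseRot : ∀ s t : Fin 3, r ≠ s → r ≠ t → s ≠ t →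
      M (pers i s) = some (itQ i) → M (pers i t) = none → False := by
    intro s t hrs hrt hst hs ht
    have hpersrs : pers (m := m) (n := n) i r ≠ pers i s := fun h => hrs (pers_inj h)
    have hpersrt : pers (m := m) (n := n) i r ≠ pers i t := fun h => hrt (pers_inj h)
    have hpersst : pers (m := m) (n := n) i s ≠ pers i t := fun h => hst (pers_inj h)
    set M' := Function.update (Function.update (Function.update M (pers i r) none)
      (pers i s) (some (itP i))) (pers i t) (some (itQ i)) with hM'def
    have e3 : M' (pers i t) = some (itQ i) := Function.update_self _ _ _
    have e2 : M' (pers i s) = some (itP i) := by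
      rw [hM'def, Function.update_of_ne hpersst, Function.update_self]
    have e1 : M' (pers i r) = none := by
      rw [hM'def, Function.update_of_ne hpersrt, Function.update_of_ne hpersrs,
        Function.update_self]
    have eo : ∀ z, z ≠ pers i r → z ≠ pers i s → z ≠ pers i t → M' z = M z := by
      intro z h1 h2 h3
      rw [hM'def, Function.update_of_ne h3, Function.update_of_ne h2,
        Function.update_of_ne h1]
    refine hpop M' ⟨?_, ?_⟩ ?_
    · intro a b hb
      by_cases h3 : a = pers i t
      · subst h3
        rw [e3] at hb
        injection hb with hb
        subst hb
        show augRank cl (pers i t) (itQ i) ≠ ⊤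
        rw [rank_Q]
        norm_num
      · by_cases h2 : a = pers i s
        · subst h2
          rw [e2] at hb
          injection hb with hb
          subst hb
          show augRank cl (pers i s) (itP i) ≠ ⊤
          rw [rank_P]
          norm_num
        · by_cases h1 : a = pers i r
          · subst h1
            rw [e1] at hb
            exact nomatch hb
          · rw [eo a h1 h2 h3] at hb
            exact hedge _ _ hb
    · intro b
      show usage M' b ≤ 1
      by_cases hbP : b = itP i
      · subst hbP
        apply usage_le_one_single _ (pers i s)
        intro z hz
        by_cases h3 : z = pers i t
        · subst h3
          rw [e3] at hz
          injection hz with hz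
          exact absurd hz hPQ.symm
        · by_cases h2 : z = pers i s
          · exact h2
          · by_cases h1 : z = pers i r
            · subst h1
              rw [e1] at hz
              exact nomatch hz
            · rw [eo z h1 h2 h3] at hz
              exact absurd (unique_holder (hcap1 _) hz hr) h1
      · by_cases hbQ : b = itQ i
        · subst hbQ
          apply usage_le_one_single _ (pers i t)
          intro z hz
          by_cases h3 : z = pers i t
          · exact h3
          · by_cases h2 : z = pers i s
            · subst h2
              rw [e2] at hz
              injection hz with hz
              exact absurd hz hPQ
            · by_cases h1 : z = pers i r
              · subst h1
                rw [e1] at hz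
                exact nomatch hz
              · rw [eo z h1 h2 h3] at hz
                exact absurd (unique_holder (hcap1 _) hz hs) h2
        · calc usage M' b ≤ usage M b := by
                apply usage_le_of
                intro z hz
                by_cases h3 : z = pers i t
                · subst h3
                  rw [e3] at hz
                  injection hz with hz
                  exact absurd hz.symm hbQ
                · by_cases h2 : z = pers i s
                  · subst h2
                    rw [e2] at hz
                    injection hz with hz
                    exact absurd hz.symm hbP
                  · by_cases h1 : z = pers i r
                    · subst h1
                      rw [e1] at hz
                      exact nomatch hz
                    · rwa [eo z h1 h2 h3] at hz
            _ ≤ 1 := hcap1 b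
    · apply morePop_two (pers i r) (pers i s) (pers i t) hpersst
      · intro z hz
        by_cases h3 : z = pers i t
        · subst h3
          rcases hz with ⟨b, hb, _⟩ | ⟨b, b', hb, _, _⟩ <;>
            rw [ht] at hb <;> exact nomatch hb
        · by_cases h2 : z = pers i s
          · subst h2
            rcases hz with ⟨b, hb, hb'⟩ | ⟨b, b', hb, hb', hlt⟩
            · rw [e2] at hb'
              exact nomatch hb'
            · rw [e2] at hb'
              injection hb' with hb'
              rw [hs] at hb
              injection hb with hb
              rw [← hb, ← hb', rank_Q, rank_P] at hlt
              norm_num at hlt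
          · by_cases h1 : z = pers i r
            · exact h1
            · exact absurd (prefers_ne hz (by rw [eo z h1 h2 h3])) (fun h => h)
      · refine Or.inr ⟨itP i, itQ i, e2, hs, ?_⟩
        rw [rank_P, rank_Q]
        norm_num
      · exact Or.inl ⟨itQ i, e3, ht⟩
  -- Final dispatch
  obtain ⟨s, t, hrs, hrt, hst⟩ : ∃ s t : Fin 3, r ≠ s ∧ r ≠ t ∧ s ≠ t := by
    fin_cases r
    · exact ⟨1, 2, by decide, by decide, by decide⟩
    · exact ⟨0, 2, by decide, by decide, by decide⟩
    · exact ⟨0, 1, by decide, by decide, by decide⟩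
  have notP : ∀ k : Fin 3, r ≠ k → M (pers i k) ≠ some (itP i) := by
    intro k hk hMk
    exact hk (pers_inj (unique_holder (hcap1 _) hr hMk))
  have hsd : M (pers i s) = none ∨ M (pers i s) = some (itQ i) := by
    rcases domA s with h | h | h | h
    · exact Or.inl h
    · exact absurd h (notP s hrs)
    · exact Or.inr h
    · exact absurd h (caseU s hrs)
  have htd : M (pers i t) = none ∨ M (pers i t) = some (itQ i) := by
    rcases domA t with h | h | h | h
    · exact Or.inl h
    · exact absurd h (notP t hrt)
    · exact Or.inr h
    · exact absurd h (caseU t hrt)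
  rcases hsd with hsd | hsd <;> rcases htd with htd | htd
  · -- both unmatched : q_i is free
    refine caseQfree t htd ?_
    intro z hz
    obtain ⟨k, rfl⟩ := hQhold z hz
    rcases fin3_tri r s t k hrs hrt hst with hk | hk | hk <;> subst hk
    · rw [hr] at hz
      injection hz with hz
      exact hPQ hz
    · rw [hsd] at hz
      exact nomatch hz
    · rw [htd] at hz
      exact nomatch hz
  · exact caseRot t s hrt hrs hst.symm htd hsd
  · exact caseRot s t hrs hrt hst hsd htd
  · exact hst (pers_inj (unique_holder (hcap1 _) hsd htd))
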